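/- Let T be a bounded linear operator on a Banach space X that is an (m,∞)-isometry. Then T is an (m+1,∞)-isometry. -/

import Mathlib

/-- T is an (m,∞)-isometry: for every x, the maximum of the norms of T^k x over even
k in {0,...,m} equals the maximum over odd k in {0,...,m}. -/
def IsMInfIsometry {𝕜 X : Type*} [RCLike 𝕜] [NormedAddCommGroup X] [NormedSpace 𝕜 X]
    (T : X →L[𝕜] X) (m : ℕ) : Prop :=
  ∀ x : X,
    (((Finset.range (m + 1)).filter fun k => Even k).sup fun k => ‖(T ^ k) x‖₊) =
    (((Finset.range (m + 1)).filter fun k => Odd k).sup fun k => ‖(T ^ k) x‖₊)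

theorem stmt_17 {𝕜 X : Type*} [RCLike 𝕜] [NormedAddCommGroup X] [NormedSpace 𝕜 X]
    [CompleteSpace X] (T : X →L[𝕜] X) (m : ℕ) (hm : 1 ≤ m) (hT : IsMInfIsometry T m) :
    IsMInfIsometry T (m + 1) := by
  intro x
  set f : ℕ → NNReal := fun k => ‖(T ^ k) x‖₊ with hf
  -- shifted norms
  have hshift : (fun k => ‖(T ^ k) (T x)‖₊) = fun k => f (k + 1) := by
    funext k
    simp [hf, pow_succ, ContinuousLinearMap.mul_apply]
  -- reindexing identities
  have himg1 : ((Finset.range (m + 1)).filter fun k => Even k).image (· + 1)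
      = (Finset.range (m + 2)).filter fun k => Odd k := by
    ext j
    simp only [Finset.mem_image, Finset.mem_filter, Finset.mem_range, Nat.even_iff,
      Nat.odd_iff]
    constructor
    · rintro ⟨a, ⟨ha1, ha2⟩, rfl⟩; omega
    · rintro ⟨hj1, hj2⟩; exact ⟨j - 1, by omega, by omega⟩
  have himg2 : ((Finset.range (m + 1)).filter fun k => Odd k).image (· + 1)
      = (Finset.range (m + 2)).filter fun k => Even k ∧ k ≠ 0 := by
    ext j
    simp only [Finset.mem_image, Finset.mem_filter, Finset.mem_range, Nat.even_iff,
      Nat.odd_iff]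
    constructor
    · rintro ⟨a, ⟨ha1, ha2⟩, rfl⟩; omega
    · rintro ⟨hj1, hj2, hj3⟩; exact ⟨j - 1, by omega, by omega⟩
  have h2 := hT (T x)
  rw [hshift] at h2
  -- B = B2
  have hBB2 : (((Finset.range (m + 2)).filter fun k => Odd k).sup f)
      = (((Finset.range (m + 2)).filter fun k => Even k ∧ k ≠ 0).sup f) := by
    rw [← himg1, ← himg2, Finset.sup_image, Finset.sup_image]
    exact h2
  have h1 := hT x
  apply le_antisymm
  · apply Finset.sup_le
    intro j hj
    simp only [Finset.mem_filter, Finset.mem_range] at hj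
    rcases eq_or_ne j 0 with rfl | hj0
    · calc f 0 ≤ ((Finset.range (m + 1)).filter fun k => Even k).sup f :=
            Finset.le_sup (by simp [Nat.even_iff])
        _ = ((Finset.range (m + 1)).filter fun k => Odd k).sup f := h1
        _ ≤ ((Finset.range (m + 2)).filter fun k => Odd k).sup f := by
            apply Finset.sup_mono
            apply Finset.filter_subset_filter _ (Finset.range_subset_range.2 (by omega))
    · calc f j ≤ ((Finset.range (m + 2)).filter fun k => Even k ∧ k ≠ 0).sup f :=
            Finset.le_sup (by simp only [Finset.mem_filter, Finset.mem_range]; exact ⟨hj.1, hj.2, hj0⟩)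
        _ = ((Finset.range (m + 2)).filter fun k => Odd k).sup f := hBB2.symm
  · rw [hBB2]
    apply Finset.sup_mono
    apply Finset.monotone_filter_right
    intro k _ hk
    exact hk.1
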